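/- Let S be a nonempty finite index set and let d, r be positive integers. For each u in S, let p_u be a nonzero vector in ℝ^d with ‖p_u‖₂ ≤ C_p, let p̄_u = p_u/‖p_u‖₂, and let α_u be a real number with 0 ≤ α_u ≤ 1. Let (B_u)_{u∈S} be mutually independent random d×r real matrices (with all relevant moments finite) such that for every u: (i) E[‖B_u‖⁴] ≤ L², where ‖·‖ is the ℓ²→ℓ² operator norm, and (ii) ‖E[B_u B_uᵀ p̄_u] − p̄_u‖₂ ≤ √δ for some δ ≥ 0. Then the expected squared error of the averaged projected update satisfies E[ ‖ (1/|S|) ∑_{u∈S} α_u ( B_u B_uᵀ p_u − p_u ) ‖₂² ] ≤ C_p² δ + (1/|S|) · (max_{u∈S} α_u ‖p_u‖₂²) · (L² + 1). -/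

import Mathlib

open MeasureTheory ProbabilityTheory Matrix

/-- The Euclidean (ℓ²) norm of a vector in `ℝ^n`. -/
noncomputable def evnorm {n : ℕ} (v : Fin n → ℝ) : ℝ := Real.sqrt (∑ i, v i ^ 2)

/-- The ℓ² → ℓ² operator norm of a `d × r` real matrix. -/
noncomputable def l2OpNorm {d r : ℕ} (B : Matrix (Fin d) (Fin r) ℝ) : ℝ :=
  ‖(Matrix.toEuclideanLin B).toContinuousLinearMap‖

open scoped Matrix.Norms.L2Operator

lemma l2OpNorm_eq {d r : ℕ} (A : Matrix (Fin d) (Fin r) ℝ) : l2OpNorm A = ‖A‖ := rfl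

lemma evnorm_nonneg {n : ℕ} (v : Fin n → ℝ) : 0 ≤ evnorm v := Real.sqrt_nonneg _

lemma evnorm_sq {n : ℕ} (v : Fin n → ℝ) : evnorm v ^ 2 = ∑ i, v i ^ 2 :=
  Real.sq_sqrt (Finset.sum_nonneg fun i _ => sq_nonneg _)

lemma evnorm_eq_norm {n : ℕ} (v : Fin n → ℝ) :
    evnorm v = ‖(WithLp.equiv 2 (Fin n → ℝ)).symm v‖ := by
  rw [EuclideanSpace.norm_eq]
  simp [evnorm, sq_abs]

lemma evnorm_smul {n : ℕ} (c : ℝ) (v : Fin n → ℝ) : evnorm (c • v) = |c| * evnorm v := by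
  rw [evnorm_eq_norm, evnorm_eq_norm, ← Real.norm_eq_abs]
  exact_mod_cast norm_smul c ((WithLp.equiv 2 (Fin n → ℝ)).symm v)

lemma l2OpNorm_nonneg {d r : ℕ} (A : Matrix (Fin d) (Fin r) ℝ) : 0 ≤ l2OpNorm A :=
  norm_nonneg _

lemma evnorm_mulVec {d r : ℕ} (A : Matrix (Fin d) (Fin r) ℝ) (x : Fin r → ℝ) :
    evnorm (A *ᵥ x) ≤ l2OpNorm A * evnorm x := by
  rw [evnorm_eq_norm, evnorm_eq_norm, l2OpNorm_eq]
  exact A.l2_opNorm_mulVec ((WithLp.equiv 2 (Fin r → ℝ)).symm x)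

lemma l2OpNorm_transpose {d r : ℕ} (A : Matrix (Fin d) (Fin r) ℝ) :
    l2OpNorm Aᵀ = l2OpNorm A := by
  rw [l2OpNorm_eq, l2OpNorm_eq, ← conjTranspose_eq_transpose_of_trivial]
  exact A.l2_opNorm_conjTranspose

lemma l2OpNorm_mul {d r e : ℕ} (A : Matrix (Fin d) (Fin r) ℝ) (C : Matrix (Fin r) (Fin e) ℝ) :
    l2OpNorm (A * C) ≤ l2OpNorm A * l2OpNorm C := by
  simp only [l2OpNorm_eq]; exact Matrix.l2_opNorm_mul A C

lemma inner_BBt {d r : ℕ} (A : Matrix (Fin d) (Fin r) ℝ) (x : Fin d → ℝ) :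
    ∑ i, ((A * Aᵀ) *ᵥ x) i * x i = ∑ k, (∑ i, A i k * x i) ^ 2 := by
  have h1 : ∀ i, ((A * Aᵀ) *ᵥ x) i = ∑ k, A i k * ∑ j, A j k * x j := by
    intro i
    simp only [Matrix.mulVec, Matrix.mul_apply, dotProduct, transpose_apply, Finset.sum_mul]
    rw [Finset.sum_comm]
    simp [Finset.mul_sum, mul_assoc]
  simp only [h1, Finset.sum_mul]
  rw [Finset.sum_comm]
  refine Finset.sum_congr rfl fun k _ => ?_
  rw [sq, Finset.sum_mul]
  exact Finset.sum_congr rfl fun i _ => by ring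

lemma key_det {d r : ℕ} (A : Matrix (Fin d) (Fin r) ℝ) (x : Fin d → ℝ) :
    evnorm ((A * Aᵀ) *ᵥ x - x) ^ 2 ≤ (l2OpNorm A ^ 4 + 1) * evnorm x ^ 2 := by
  set y := (A * Aᵀ) *ᵥ x with hy
  have hyb : evnorm y ^ 2 ≤ l2OpNorm A ^ 4 * evnorm x ^ 2 := by
    have h1 : evnorm y ≤ l2OpNorm (A * Aᵀ) * evnorm x := evnorm_mulVec _ x
    have h2 : l2OpNorm (A * Aᵀ) ≤ l2OpNorm A ^ 2 := by
      calc l2OpNorm (A * Aᵀ) ≤ l2OpNorm A * l2OpNorm Aᵀ := l2OpNorm_mul A Aᵀ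
        _ = l2OpNorm A ^ 2 := by rw [l2OpNorm_transpose]; ring
    have h3 : evnorm y ≤ l2OpNorm A ^ 2 * evnorm x :=
      h1.trans (mul_le_mul_of_nonneg_right h2 (evnorm_nonneg x))
    calc evnorm y ^ 2 ≤ (l2OpNorm A ^ 2 * evnorm x) ^ 2 := by
          apply pow_le_pow_left₀ (evnorm_nonneg y) h3
      _ = l2OpNorm A ^ 4 * evnorm x ^ 2 := by ring
  have hinner : 0 ≤ ∑ i, y i * x i := by
    rw [hy, inner_BBt]
    exact Finset.sum_nonneg fun k _ => sq_nonneg _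
  have hexp : evnorm (y - x) ^ 2 = evnorm y ^ 2 + evnorm x ^ 2 - 2 * ∑ i, y i * x i := by
    simp only [evnorm_sq]
    rw [← Finset.sum_add_distrib, Finset.mul_sum, ← Finset.sum_sub_distrib]
    refine Finset.sum_congr rfl fun i _ => ?_
    simp only [Pi.sub_apply]
    ring
  rw [hexp]
  nlinarith [evnorm_nonneg x, sq_nonneg (evnorm x)]

lemma evnorm_eq_zero {n : ℕ} {v : Fin n → ℝ} (h : evnorm v = 0) : v = 0 := by
  rw [evnorm_eq_norm, norm_eq_zero] at h
  simpa using congrArg (WithLp.equiv 2 (Fin n → ℝ)) h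

lemma evnorm_pos {n : ℕ} {v : Fin n → ℝ} (h : v ≠ 0) : 0 < evnorm v :=
  (evnorm_nonneg v).lt_of_ne' fun h0 => h (evnorm_eq_zero h0)

lemma evnorm_sum_le {n : ℕ} {ι : Type*} [Fintype ι] (f : ι → Fin n → ℝ) :
    evnorm (∑ u, f u) ≤ ∑ u, evnorm (f u) := by
  simp only [evnorm_eq_norm]
  rw [WithLp.equiv_symm_apply, WithLp.toLp_sum]
  exact norm_sum_le _ _

/-- Upper bound on the expected squared error of the averaged projected update: for a nonempty
finite family of mutually independent random `d × r` matrices `(B_u)` with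
`E[‖B_u‖⁴] ≤ L²` and bias `‖E[B_u B_uᵀ p̄_u] − p̄_u‖₂ ≤ √δ` on the unit normalizations
`p̄_u = p_u/‖p_u‖₂` of nonzero vectors `p_u` with `‖p_u‖₂ ≤ C_p`, and weights `0 ≤ α_u ≤ 1`,
`E[‖(1/|S|) ∑_u α_u (B_u B_uᵀ p_u − p_u)‖₂²]
  ≤ C_p² δ + (1/|S|) (max_u α_u ‖p_u‖₂²)(L² + 1)`. -/
theorem averaged_projection_error_bound {d r : ℕ} (hd : 0 < d) (hr : 0 < r)
    {ι : Type*} [Fintype ι] [Nonempty ι]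
    {Ω : Type*} [MeasurableSpace Ω] (μ : Measure Ω) [IsProbabilityMeasure μ]
    (p : ι → Fin d → ℝ) (Cp : ℝ) (hp0 : ∀ u, p u ≠ 0) (hpC : ∀ u, evnorm (p u) ≤ Cp)
    (α : ι → ℝ) (hα0 : ∀ u, 0 ≤ α u) (hα1 : ∀ u, α u ≤ 1)
    (B : ι → Ω → Fin d → Fin r → ℝ)
    (hmeas : ∀ u, Measurable (B u))
    (hindep : iIndepFun B μ)
    (L : ℝ)
    -- finite fourth operator-norm moments, bounded by L²
    (hmom : ∀ u, Integrable (fun ω => l2OpNorm (Matrix.of (B u ω)) ^ 4) μ)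
    (hL : ∀ u, ∫ ω, l2OpNorm (Matrix.of (B u ω)) ^ 4 ∂μ ≤ L ^ 2)
    (δ : ℝ) (hδ : 0 ≤ δ)
    -- the projected unit vectors are integrable, so that their expectations are meaningful
    (hproj : ∀ u i, Integrable (fun ω =>
      ((Matrix.of (B u ω) * (Matrix.of (B u ω))ᵀ).mulVec ((evnorm (p u))⁻¹ • p u)) i) μ)
    -- bounded bias
    (hbias : ∀ u, evnorm ((fun i => ∫ ω,
        ((Matrix.of (B u ω) * (Matrix.of (B u ω))ᵀ).mulVec ((evnorm (p u))⁻¹ • p u)) i ∂μ)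
      - (evnorm (p u))⁻¹ • p u) ≤ Real.sqrt δ) :
    ∫ ω, evnorm ((Fintype.card ι : ℝ)⁻¹ •
        ∑ u, α u • ((Matrix.of (B u ω) * (Matrix.of (B u ω))ᵀ).mulVec (p u) - p u)) ^ 2 ∂μ ≤
      Cp ^ 2 * δ + (Fintype.card ι : ℝ)⁻¹ *
        (Finset.univ.sup' Finset.univ_nonempty fun u => α u * evnorm (p u) ^ 2) * (L ^ 2 + 1) := by
  classical
  set c : ℝ := (Fintype.card ι : ℝ)⁻¹ with hc
  set K : ℝ := Finset.univ.sup' Finset.univ_nonempty fun u => α u * evnorm (p u) ^ 2 with hK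
  set f : ι → Fin d → Ω → ℝ :=
    fun u i ω => α u * (((Matrix.of (B u ω) * (Matrix.of (B u ω))ᵀ) *ᵥ p u) i - p u i) with hf
  set m : ι → Fin d → ℝ := fun u i => ∫ ω, f u i ω ∂μ with hm
  have hcard : (0:ℝ) < (Fintype.card ι : ℝ) := by exact_mod_cast Fintype.card_pos
  have hpe : ∀ u, 0 < evnorm (p u) := fun u => evnorm_pos (hp0 u)
  have hCp : 0 ≤ Cp := (evnorm_nonneg (p (Classical.arbitrary ι))).trans (hpC _)
  -- measurability
  have hφcont : ∀ u i, Continuous (fun A : Fin d → Fin r → ℝ =>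
      α u * (((Matrix.of A * (Matrix.of A)ᵀ) *ᵥ p u) i - p u i)) := by
    intro u i
    simp only [Matrix.mulVec, Matrix.mul_apply, dotProduct, Matrix.transpose_apply,
      Matrix.of_apply]
    fun_prop
  have hfmeas : ∀ u i, Measurable (f u i) := fun u i =>
    ((hφcont u i).measurable).comp (hmeas u)
  -- independence
  have hfind : ∀ u v, u ≠ v → ∀ i j, IndepFun (f u i) (f v j) μ := fun u v huv i j =>
    (hindep.indepFun huv).comp (hφcont u i).measurable (hφcont v j).measurable
  -- integrability of f u i
  have hfi : ∀ u i, f u i = fun ω => α u * (evnorm (p u) *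
      ((Matrix.of (B u ω) * (Matrix.of (B u ω))ᵀ).mulVec ((evnorm (p u))⁻¹ • p u)) i - p u i) := by
    intro u i
    funext ω
    rw [hf]
    congr 2
    rw [Matrix.mulVec_smul]
    simp only [Pi.smul_apply, smul_eq_mul]
    rw [← mul_assoc, mul_inv_cancel₀ (hpe u).ne', one_mul]
  have hfint : ∀ u i, Integrable (f u i) μ := by
    intro u i
    rw [hfi]
    exact (((hproj u i).const_mul _).sub (integrable_const _)).const_mul _
  -- pointwise square bound
  have hsqb : ∀ u ω, ∑ i, f u i ω ^ 2 ≤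
      α u * evnorm (p u) ^ 2 * (l2OpNorm (Matrix.of (B u ω)) ^ 4 + 1) := by
    intro u ω
    have h1 : ∑ i, f u i ω ^ 2 =
        α u ^ 2 * evnorm ((Matrix.of (B u ω) * (Matrix.of (B u ω))ᵀ) *ᵥ p u - p u) ^ 2 := by
      rw [evnorm_sq, Finset.mul_sum]
      refine Finset.sum_congr rfl fun i _ => ?_
      simp only [hf, Pi.sub_apply]
      ring
    have h2 := key_det (Matrix.of (B u ω)) (p u)
    have h3 : α u ^ 2 ≤ α u := by nlinarith [hα0 u, hα1 u]
    have h4 : (0:ℝ) ≤ l2OpNorm (Matrix.of (B u ω)) ^ 4 + 1 := by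
      positivity
    rw [h1]
    calc α u ^ 2 * evnorm ((Matrix.of (B u ω) * (Matrix.of (B u ω))ᵀ) *ᵥ p u - p u) ^ 2
        ≤ α u * ((l2OpNorm (Matrix.of (B u ω)) ^ 4 + 1) * evnorm (p u) ^ 2) := by
          nlinarith [sq_nonneg (evnorm ((Matrix.of (B u ω) * (Matrix.of (B u ω))ᵀ) *ᵥ p u - p u)),
            hα0 u]
      _ = α u * evnorm (p u) ^ 2 * (l2OpNorm (Matrix.of (B u ω)) ^ 4 + 1) := by ring
  -- integrability of squares and products
  have hbint : ∀ u, Integrable (fun ω =>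
      α u * evnorm (p u) ^ 2 * (l2OpNorm (Matrix.of (B u ω)) ^ 4 + 1)) μ := fun u =>
    (((hmom u).add (integrable_const 1)).const_mul _)
  have hfsq : ∀ u i, Integrable (fun ω => f u i ω * f u i ω) μ := by
    intro u i
    refine Integrable.mono' (hbint u)
      (((hfmeas u i).mul (hfmeas u i)).aestronglyMeasurable)
      (Filter.Eventually.of_forall fun ω => ?_)
    have h1 : f u i ω * f u i ω = f u i ω ^ 2 := (sq _).symm
    have h2 : f u i ω ^ 2 ≤ ∑ j, f u j ω ^ 2 :=
      Finset.single_le_sum (f := fun j => f u j ω ^ 2) (fun j _ => sq_nonneg _)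
        (Finset.mem_univ i)
    rw [Real.norm_eq_abs, h1, abs_of_nonneg (sq_nonneg _)]
    exact h2.trans (hsqb u ω)
  have hmul_int : ∀ u v i, Integrable (fun ω => f u i ω * f v i ω) μ := by
    intro u v i
    rcases eq_or_ne u v with rfl | huv
    · exact hfsq u i
    · exact (hfind u v huv i i).integrable_mul (hfint u i) (hfint v i)
  -- off-diagonal factorization
  have hoff : ∀ u v, u ≠ v → ∀ i, ∫ ω, f u i ω * f v i ω ∂μ = m u i * m v i := by
    intro u v huv i
    exact (hfind u v huv i i).integral_fun_mul_eq_mul_integral (hfint u i).aestronglyMeasurable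
      (hfint v i).aestronglyMeasurable
  -- per-coordinate expansion
  have hexp : ∀ i ω, (∑ u, f u i ω) ^ 2 = ∑ u, ∑ v, f u i ω * f v i ω := by
    intro i ω
    rw [sq, Finset.sum_mul_sum]
  have hsum_int : ∀ i, Integrable (fun ω => (∑ u, f u i ω) ^ 2) μ := by
    intro i
    have h : (fun ω => (∑ u, f u i ω) ^ 2) = fun ω => ∑ u, ∑ v, f u i ω * f v i ω :=
      funext (hexp i)
    rw [h]
    exact integrable_finset_sum _ fun u _ => integrable_finset_sum _ fun v _ => hmul_int u v i
  have hcoord : ∀ i, ∫ ω, (∑ u, f u i ω) ^ 2 ∂μ =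
      (∑ u, m u i) ^ 2 + ∑ u, ((∫ ω, f u i ω ^ 2 ∂μ) - m u i ^ 2) := by
    intro i
    have step1 : ∫ ω, (∑ u, f u i ω) ^ 2 ∂μ = ∑ u, ∑ v, ∫ ω, f u i ω * f v i ω ∂μ := by
      simp_rw [hexp i]
      rw [integral_finset_sum _ fun u _ =>
        integrable_finset_sum _ fun v _ => hmul_int u v i]
      exact Finset.sum_congr rfl fun u _ =>
        integral_finset_sum _ fun v _ => hmul_int u v i
    have hrow : ∀ u, ∑ v, (∫ ω, f u i ω * f v i ω ∂μ) =
        (∑ v, m u i * m v i) + ((∫ ω, f u i ω ^ 2 ∂μ) - m u i ^ 2) := by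
      intro u
      have hdiff : ∑ v, ((∫ ω, f u i ω * f v i ω ∂μ) - m u i * m v i) =
          (∫ ω, f u i ω ^ 2 ∂μ) - m u i ^ 2 := by
        rw [Finset.sum_eq_single_of_mem u (Finset.mem_univ u)]
        · have : (fun ω => f u i ω * f u i ω) = fun ω => f u i ω ^ 2 := by
            funext ω; rw [sq]
          rw [this, sq]
        · intro v _ hvu
          rw [hoff u v (Ne.symm hvu) i, sub_self]
      rw [Finset.sum_sub_distrib] at hdiff
      linarith
    rw [step1]
    simp_rw [hrow]
    rw [Finset.sum_add_distrib, sq, Finset.sum_mul_sum]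
  -- rewrite the integrand
  have hptw : ∀ ω, evnorm ((Fintype.card ι : ℝ)⁻¹ •
      ∑ u, α u • ((Matrix.of (B u ω) * (Matrix.of (B u ω))ᵀ).mulVec (p u) - p u)) ^ 2 =
      c ^ 2 * ∑ i, (∑ u, f u i ω) ^ 2 := by
    intro ω
    rw [evnorm_smul, mul_pow, sq_abs, evnorm_sq]
    congr 1
    refine Finset.sum_congr rfl fun i _ => ?_
    congr 1
    rw [Finset.sum_apply]
    refine Finset.sum_congr rfl fun u _ => ?_
    simp [hf, Pi.smul_apply, Pi.sub_apply, smul_eq_mul]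
  have hLHS : ∫ ω, evnorm ((Fintype.card ι : ℝ)⁻¹ •
      ∑ u, α u • ((Matrix.of (B u ω) * (Matrix.of (B u ω))ᵀ).mulVec (p u) - p u)) ^ 2 ∂μ =
      c ^ 2 * ∑ i, ((∑ u, m u i) ^ 2 + ∑ u, ((∫ ω, f u i ω ^ 2 ∂μ) - m u i ^ 2)) := by
    calc ∫ ω, evnorm ((Fintype.card ι : ℝ)⁻¹ •
        ∑ u, α u • ((Matrix.of (B u ω) * (Matrix.of (B u ω))ᵀ).mulVec (p u) - p u)) ^ 2 ∂μ
        = ∫ ω, c ^ 2 * ∑ i, (∑ u, f u i ω) ^ 2 ∂μ := by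
          exact integral_congr_ae (Filter.Eventually.of_forall fun ω => hptw ω)
      _ = c ^ 2 * ∫ ω, ∑ i, (∑ u, f u i ω) ^ 2 ∂μ := integral_const_mul _ _
      _ = c ^ 2 * ∑ i, ∫ ω, (∑ u, f u i ω) ^ 2 ∂μ := by
          rw [integral_finset_sum _ fun i _ => hsum_int i]
      _ = c ^ 2 * ∑ i, ((∑ u, m u i) ^ 2 + ∑ u, ((∫ ω, f u i ω ^ 2 ∂μ) - m u i ^ 2)) := by
          rw [Finset.sum_congr rfl fun i _ => hcoord i]
  -- closed form for the mean vector
  have hmrep : ∀ u, m u = (α u * evnorm (p u)) •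
      ((fun i => ∫ ω, ((Matrix.of (B u ω) * (Matrix.of (B u ω))ᵀ).mulVec
          ((evnorm (p u))⁻¹ • p u)) i ∂μ) - (evnorm (p u))⁻¹ • p u) := by
    intro u
    funext i
    have h1 : m u i = α u * (evnorm (p u) *
        (∫ ω, ((Matrix.of (B u ω) * (Matrix.of (B u ω))ᵀ).mulVec
          ((evnorm (p u))⁻¹ • p u)) i ∂μ) - p u i) := by
      rw [hm]
      simp only
      rw [hfi u i, integral_const_mul]
      congr 1
      rw [integral_sub ((hproj u i).const_mul _) (integrable_const _), integral_const_mul,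
        integral_const]
      simp [measure_univ]
    rw [h1]
    simp only [Pi.smul_apply, Pi.sub_apply, smul_eq_mul]
    have he : evnorm (p u) * (evnorm (p u))⁻¹ = 1 := mul_inv_cancel₀ (hpe u).ne'
    linear_combination (α u * p u i) * he
  have hmb : ∀ u, evnorm (m u) ≤ Cp * Real.sqrt δ := by
    intro u
    rw [hmrep u, evnorm_smul,
      abs_of_nonneg (mul_nonneg (hα0 u) (evnorm_nonneg (p u)))]
    have h1 : α u * evnorm (p u) ≤ Cp := by
      calc α u * evnorm (p u) ≤ 1 * evnorm (p u) :=
            mul_le_mul_of_nonneg_right (hα1 u) (evnorm_nonneg _)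
        _ = evnorm (p u) := one_mul _
        _ ≤ Cp := hpC u
    exact mul_le_mul h1 (hbias u) (evnorm_nonneg _) hCp
  -- bias term bound
  have hbias_sum : ∑ i, (∑ u, m u i) ^ 2 ≤
      ((Fintype.card ι : ℝ) * (Cp * Real.sqrt δ)) ^ 2 := by
    have h1 : (fun i => ∑ u, m u i) = ∑ u, m u := by
      funext i; rw [Finset.sum_apply]
    have h2 : evnorm (∑ u, m u) ≤ (Fintype.card ι : ℝ) * (Cp * Real.sqrt δ) := by
      calc evnorm (∑ u, m u) ≤ ∑ u, evnorm (m u) := evnorm_sum_le m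
        _ ≤ ∑ _u : ι, Cp * Real.sqrt δ := Finset.sum_le_sum fun u _ => hmb u
        _ = (Fintype.card ι : ℝ) * (Cp * Real.sqrt δ) := by
            rw [Finset.sum_const, nsmul_eq_mul, Finset.card_univ]
    calc ∑ i, (∑ u, m u i) ^ 2 = evnorm (fun i => ∑ u, m u i) ^ 2 := (evnorm_sq _).symm
      _ = evnorm (∑ u, m u) ^ 2 := by rw [h1]
      _ ≤ ((Fintype.card ι : ℝ) * (Cp * Real.sqrt δ)) ^ 2 :=
          pow_le_pow_left₀ (evnorm_nonneg _) h2 2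
  -- variance term bound
  have hfsq' : ∀ u i, Integrable (fun ω => f u i ω ^ 2) μ := by
    intro u i
    simpa [pow_two] using hfsq u i
  have hvar : ∀ u, ∑ i, ((∫ ω, f u i ω ^ 2 ∂μ) - m u i ^ 2) ≤ K * (L ^ 2 + 1) := by
    intro u
    have hupe : 0 ≤ α u * evnorm (p u) ^ 2 := mul_nonneg (hα0 u) (sq_nonneg _)
    have h0 : ∑ i, ((∫ ω, f u i ω ^ 2 ∂μ) - m u i ^ 2) ≤ ∑ i, ∫ ω, f u i ω ^ 2 ∂μ :=
      Finset.sum_le_sum fun i _ => sub_le_self _ (sq_nonneg _)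
    have h1 : ∑ i, ∫ ω, f u i ω ^ 2 ∂μ = ∫ ω, ∑ i, f u i ω ^ 2 ∂μ :=
      (integral_finset_sum _ fun i _ => hfsq' u i).symm
    have h2 : ∫ ω, ∑ i, f u i ω ^ 2 ∂μ ≤
        ∫ ω, α u * evnorm (p u) ^ 2 * (l2OpNorm (Matrix.of (B u ω)) ^ 4 + 1) ∂μ :=
      integral_mono (integrable_finset_sum _ fun i _ => hfsq' u i) (hbint u)
        fun ω => hsqb u ω
    have h3 : ∫ ω, α u * evnorm (p u) ^ 2 * (l2OpNorm (Matrix.of (B u ω)) ^ 4 + 1) ∂μ =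
        α u * evnorm (p u) ^ 2 * ((∫ ω, l2OpNorm (Matrix.of (B u ω)) ^ 4 ∂μ) + 1) := by
      rw [integral_const_mul]
      congr 1
      rw [integral_add (hmom u) (integrable_const 1), integral_const]
      simp [measure_univ]
    have h4 : α u * evnorm (p u) ^ 2 * ((∫ ω, l2OpNorm (Matrix.of (B u ω)) ^ 4 ∂μ) + 1) ≤
        α u * evnorm (p u) ^ 2 * (L ^ 2 + 1) :=
      mul_le_mul_of_nonneg_left (by linarith [hL u]) hupe
    have h5 : α u * evnorm (p u) ^ 2 ≤ K :=
      Finset.le_sup' (fun u => α u * evnorm (p u) ^ 2) (Finset.mem_univ u)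
    have h6 : α u * evnorm (p u) ^ 2 * (L ^ 2 + 1) ≤ K * (L ^ 2 + 1) :=
      mul_le_mul_of_nonneg_right h5 (by positivity)
    linarith
  -- assemble
  rw [hLHS]
  have hsplit : c ^ 2 * ∑ i, ((∑ u, m u i) ^ 2 + ∑ u, ((∫ ω, f u i ω ^ 2 ∂μ) - m u i ^ 2)) =
      c ^ 2 * (∑ i, (∑ u, m u i) ^ 2) +
      c ^ 2 * ∑ u, ∑ i, ((∫ ω, f u i ω ^ 2 ∂μ) - m u i ^ 2) := by
    rw [Finset.sum_add_distrib, mul_add, Finset.sum_comm]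
  rw [hsplit]
  have hc0 : 0 ≤ c := inv_nonneg.mpr hcard.le
  have hccard : c * (Fintype.card ι : ℝ) = 1 := inv_mul_cancel₀ hcard.ne'
  have hb1 : c ^ 2 * (∑ i, (∑ u, m u i) ^ 2) ≤ Cp ^ 2 * δ := by
    calc c ^ 2 * (∑ i, (∑ u, m u i) ^ 2) ≤
        c ^ 2 * ((Fintype.card ι : ℝ) * (Cp * Real.sqrt δ)) ^ 2 :=
          mul_le_mul_of_nonneg_left hbias_sum (by positivity)
      _ = (c * (Fintype.card ι : ℝ)) ^ 2 * (Cp ^ 2 * Real.sqrt δ ^ 2) := by ring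
      _ = Cp ^ 2 * δ := by rw [hccard, Real.sq_sqrt hδ]; ring
  have hb2 : c ^ 2 * ∑ u, ∑ i, ((∫ ω, f u i ω ^ 2 ∂μ) - m u i ^ 2) ≤
      c * K * (L ^ 2 + 1) := by
    calc c ^ 2 * ∑ u, ∑ i, ((∫ ω, f u i ω ^ 2 ∂μ) - m u i ^ 2) ≤
        c ^ 2 * ∑ _u : ι, K * (L ^ 2 + 1) :=
          mul_le_mul_of_nonneg_left (Finset.sum_le_sum fun u _ => hvar u) (by positivity)
      _ = c * (c * (Fintype.card ι : ℝ)) * (K * (L ^ 2 + 1)) := by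
          rw [Finset.sum_const, nsmul_eq_mul, Finset.card_univ]; ring
      _ = c * K * (L ^ 2 + 1) := by rw [hccard]; ring
  linarith
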